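/- For the GHZ class pure state |ψ⟩ = cos θ |000⟩ + sin θ |111⟩, the relative entropy of coherence in the computational basis equals the binary entropy H(cos²θ) = −cos²θ log₂ cos²θ − sin²θ log₂ sin²θ, and consequently the Bell-type combination B_{C_r} = 6 + 2H(cos²θ) ≥ 6, with strict inequality when θ ∈ (0, π/2). -/

import Mathlib

open Matrix
open scoped ComplexOrder

/-- Von Neumann entropy (base 2) of a Hermitian matrix, via its eigenvalues. -/
noncomputable def vnEntropy {n : Type*} [Fintype n] [DecidableEq n] (ρ : Matrix n n ℂ) : ℝ :=
  if h : ρ.IsHermitian then (∑ i, Real.negMulLog (h.eigenvalues i)) / Real.log 2 else 0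

/-- Relative entropy of coherence in the standard (computational) basis. -/
noncomputable def Cr {n : Type*} [Fintype n] [DecidableEq n] (ρ : Matrix n n ℂ) : ℝ :=
  vnEntropy (Matrix.diagonal (fun i => ρ i i)) - vnEntropy ρ

/-- The GHZ-class pure state `cos θ |000⟩ + sin θ |111⟩`. -/
noncomputable def ghzClass (θ : ℝ) : (Fin 2 × Fin 2 × Fin 2) → ℂ := fun p =>
  if p = (0, 0, 0) then (Real.cos θ : ℂ)
  else if p = (1, 1, 1) then (Real.sin θ : ℂ) else 0

/-- Binary entropy of `cos²θ` (base 2). -/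
noncomputable def binEnt (θ : ℝ) : ℝ :=
  -(Real.cos θ ^ 2 * Real.logb 2 (Real.cos θ ^ 2)
    + Real.sin θ ^ 2 * Real.logb 2 (Real.sin θ ^ 2))

open Polynomial in
lemma aux_charpoly_diagonal {n : Type*} [Fintype n] [DecidableEq n] (d : n → ℂ) :
    (Matrix.diagonal d).charpoly = ∏ i, (X - C (d i)) := by
  have h : charmatrix (Matrix.diagonal d) = Matrix.diagonal (fun i => X - C (d i)) := by
    ext i j
    by_cases hij : i = j
    · subst hij; simp
    · rw [Matrix.charmatrix_apply_ne _ _ _ hij, Matrix.diagonal_apply_ne _ hij,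
        Matrix.diagonal_apply_ne _ hij]
      simp
  rw [Matrix.charpoly, h, Matrix.det_diagonal]

open Polynomial in
lemma aux_charpoly_conj {n : Type*} [Fintype n] [DecidableEq n] (U A : Matrix n n ℂ)
    (hU : U * star U = 1) :
    (U * A * star U).charpoly = A.charpoly := by
  let f : Matrix n n ℂ →+* Matrix n n ℂ[X] := (Polynomial.C : ℂ →+* ℂ[X]).mapMatrix
  have hcomm : Commute (Matrix.scalar n (X : ℂ[X])) (f U) :=
    Matrix.scalar_commute _ (fun r => Commute.all _ _) _
  have hfmul : f U * f (star U) = 1 := by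
    rw [← _root_.map_mul f, hU]; exact f.map_one
  have key : charmatrix (U * A * star U) = f U * charmatrix A * f (star U) := by
    unfold Matrix.charmatrix
    rw [mul_sub, sub_mul]
    congr 1
    · rw [← hcomm.eq, mul_assoc, hfmul, mul_one]
    · show _ = f U * f A * f (star U)
      rw [← _root_.map_mul f, ← _root_.map_mul f]
  have hdet : (f U).det * (f (star U)).det = 1 := by
    rw [← Matrix.det_mul, hfmul, Matrix.det_one]
  rw [Matrix.charpoly, Matrix.charpoly, key, Matrix.det_mul, Matrix.det_mul]
  calc (f U).det * (charmatrix A).det * (f (star U)).det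
      = (charmatrix A).det * ((f U).det * (f (star U)).det) := by ring
    _ = (charmatrix A).det := by rw [hdet, mul_one]

open Polynomial in
/-- For a real diagonal matrix, the multiset of eigenvalues is the multiset of entries,
so any sum of a function over the eigenvalues equals the sum over the entries. -/
lemma aux_sum_eig_diagonal {n : Type*} [Fintype n] [DecidableEq n] (d : n → ℝ)
    (h : (Matrix.diagonal (fun i => ((d i : ℝ) : ℂ))).IsHermitian) (f : ℝ → ℝ) :
    ∑ i, f (h.eigenvalues i) = ∑ i, f (d i) := by
  set A := Matrix.diagonal (fun i => ((d i : ℝ) : ℂ)) with hA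
  have hU : (Matrix.IsHermitian.eigenvectorUnitary h : Matrix n n ℂ)
      * star (Matrix.IsHermitian.eigenvectorUnitary h : Matrix n n ℂ) = 1 :=
    Matrix.mem_unitaryGroup_iff.mp (Matrix.IsHermitian.eigenvectorUnitary h).2
  have h1 : A.charpoly = ∏ i, (X - C ((d i : ℂ))) := aux_charpoly_diagonal _
  have h2 : A.charpoly = ∏ i, (X - C ((h.eigenvalues i : ℝ) : ℂ)) := by
    conv_lhs => rw [h.spectral_theorem]
    rw [Unitary.conjStarAlgAut_apply, aux_charpoly_conj _ _ hU, aux_charpoly_diagonal]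
    rfl
  have hprod : ∏ i, (X - C ((d i : ℝ) : ℂ)) = ∏ i, (X - C ((h.eigenvalues i : ℝ) : ℂ)) := by
    rw [← h1, h2]
  have hmult : Finset.univ.val.map (fun i => ((d i : ℝ) : ℂ))
      = Finset.univ.val.map (fun i => ((h.eigenvalues i : ℝ) : ℂ)) := by
    have e1 := Polynomial.roots_multiset_prod_X_sub_C
      (Finset.univ.val.map (fun i => ((d i : ℝ) : ℂ)))
    have e2 := Polynomial.roots_multiset_prod_X_sub_C
      (Finset.univ.val.map (fun i => ((h.eigenvalues i : ℝ) : ℂ)))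
    rw [← e1, ← e2]
    congr 1
    simp only [Multiset.map_map, Function.comp_def, ← Finset.prod_eq_multiset_prod]
    exact hprod
  have := congrArg (fun s : Multiset ℂ => (s.map (fun z => f z.re)).sum) hmult
  simp only [Multiset.map_map, Function.comp_def, Complex.ofReal_re] at this
  rw [Finset.sum_eq_multiset_sum, Finset.sum_eq_multiset_sum]
  exact this.symm

/-- Eigenvalues of a Hermitian idempotent are 0 or 1. -/
lemma aux_eig_idem {n : Type*} [Fintype n] [DecidableEq n] (A : Matrix n n ℂ)
    (h : A.IsHermitian) (hidem : A * A = A) (i : n) :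
    h.eigenvalues i = 0 ∨ h.eigenvalues i = 1 := by
  set U := (Matrix.IsHermitian.eigenvectorUnitary h : Matrix n n ℂ) with hUdef
  have hU : U * star U = 1 := Matrix.mem_unitaryGroup_iff.mp (Matrix.IsHermitian.eigenvectorUnitary h).2
  have hD : star U * A * U = Matrix.diagonal ((RCLike.ofReal : ℝ → ℂ) ∘ h.eigenvalues) := by
    have hsU : star U * U = 1 := Matrix.mem_unitaryGroup_iff'.mp (Matrix.IsHermitian.eigenvectorUnitary h).2
    conv_lhs => rw [h.spectral_theorem, Unitary.conjStarAlgAut_apply]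
    rw [← hUdef]
    simp only [Matrix.mul_assoc]
    rw [hsU, Matrix.mul_one, ← Matrix.mul_assoc, hsU, Matrix.one_mul]
  set D := Matrix.diagonal ((RCLike.ofReal : ℝ → ℂ) ∘ h.eigenvalues) with hDdef
  have hDD : D * D = D := by
    rw [← hD]
    calc (star U * A * U) * (star U * A * U)
        = star U * (A * (U * star U) * A) * U := by
          simp only [Matrix.mul_assoc]
      _ = star U * A * U := by rw [hU, Matrix.mul_one, hidem, Matrix.mul_assoc]
  have hentry : ((h.eigenvalues i : ℝ) : ℂ) * ((h.eigenvalues i : ℝ) : ℂ)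
      = ((h.eigenvalues i : ℝ) : ℂ) := by
    have := congrFun (congrFun hDD i) i
    simpa [hDdef, Matrix.mul_apply, Matrix.diagonal_apply, Function.comp] using this
  have hre : h.eigenvalues i * h.eigenvalues i = h.eigenvalues i := by
    exact_mod_cast hentry
  rcases mul_eq_zero.mp (show h.eigenvalues i * (h.eigenvalues i - 1) = 0 by ring_nf; linarith [hre]) with h0 | h1
  · exact Or.inl h0
  · exact Or.inr (by linarith [sub_eq_zero.mp h1])

theorem stmt_14 (θ : ℝ) :
    Cr (Matrix.vecMulVec (ghzClass θ) (star (ghzClass θ))) = binEnt θ ∧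
    6 + 2 * binEnt θ ≥ 6 ∧
    (θ ∈ Set.Ioo 0 (Real.pi / 2) → 6 + 2 * binEnt θ > 6) := by
  set v := ghzClass θ with hv
  set P := Matrix.vecMulVec v (star v) with hP
  -- Hermitian
  have hPh : P.IsHermitian := by
    unfold Matrix.IsHermitian
    ext i j
    simp [hP, Matrix.vecMulVec_apply, Matrix.conjTranspose_apply, mul_comm]
  -- norm 1
  have hnorm : ∑ k : (Fin 2 × Fin 2 × Fin 2), star (v k) * v k = 1 := by
    rw [hv]
    simp only [ghzClass, Fintype.sum_prod_type, Fin.sum_univ_two]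
    norm_num [Prod.ext_iff]
    rw [← Complex.ofReal_cos, ← Complex.ofReal_sin, Complex.conj_ofReal, Complex.conj_ofReal]
    norm_cast
    rw [← Real.cos_sq_add_sin_sq θ]
    ring
  -- idempotent
  have hidem : P * P = P := by
    ext i j
    simp only [hP, Matrix.mul_apply, Matrix.vecMulVec_apply]
    calc ∑ k, v i * star v k * (v k * star v j)
        = (v i * star v j) * ∑ k, star (v k) * v k := by
          rw [Finset.mul_sum]; apply Finset.sum_congr rfl; intro k _
          simp only [Pi.star_apply]; ring
      _ = v i * star v j := by rw [hnorm, mul_one]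
  -- entropy of pure state is 0
  have hvnP : vnEntropy P = 0 := by
    unfold vnEntropy
    rw [dif_pos hPh]
    have : ∀ i, Real.negMulLog (hPh.eigenvalues i) = 0 := by
      intro i
      rcases aux_eig_idem P hPh hidem i with h0 | h1
      · rw [h0, Real.negMulLog_zero]
      · rw [h1, Real.negMulLog_one]
    rw [Finset.sum_congr rfl (fun i _ => this i), Finset.sum_const, smul_zero, zero_div]
  -- diagonal entries
  set d : (Fin 2 × Fin 2 × Fin 2) → ℝ := fun p =>
    if p = (0, 0, 0) then Real.cos θ ^ 2 else if p = (1, 1, 1) then Real.sin θ ^ 2 else 0 with hd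
  have hdiag : (fun i => P i i) = fun i => ((d i : ℝ) : ℂ) := by
    funext p
    simp only [hP, Matrix.vecMulVec_apply, hv, ghzClass, hd, Pi.star_apply]
    by_cases h0 : p = (0, 0, 0)
    · subst h0
      rw [if_pos rfl, if_pos rfl, Complex.star_def, Complex.conj_ofReal,
        Complex.ofReal_pow, sq]
    · by_cases h1 : p = (1, 1, 1)
      · subst h1
        rw [if_neg h0, if_pos rfl, if_neg h0, if_pos rfl, Complex.star_def,
          Complex.conj_ofReal, Complex.ofReal_pow, sq]
      · rw [if_neg h0, if_neg h1, if_neg h0, if_neg h1]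
        simp
  have hDh' : (Matrix.diagonal (fun i => ((d i : ℝ) : ℂ))).IsHermitian := by
    have hstar : star (fun i => ((d i : ℝ) : ℂ)) = fun i => ((d i : ℝ) : ℂ) := by
      funext i; rw [Pi.star_apply, Complex.star_def, Complex.conj_ofReal]
    unfold Matrix.IsHermitian
    rw [Matrix.diagonal_conjTranspose, hstar]
  have hmat : Matrix.diagonal (fun i => P i i) = Matrix.diagonal (fun i => ((d i : ℝ) : ℂ)) := by
    rw [hdiag]
  -- entropy of diagonal part
  have hvnD : vnEntropy (Matrix.diagonal (fun i => P i i)) = binEnt θ := by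
    rw [hmat]
    unfold vnEntropy
    rw [dif_pos hDh', aux_sum_eig_diagonal d hDh' Real.negMulLog]
    have hsum : ∑ i, Real.negMulLog (d i)
        = Real.negMulLog (Real.cos θ ^ 2) + Real.negMulLog (Real.sin θ ^ 2) := by
      simp only [hd, Fintype.sum_prod_type, Fin.sum_univ_two]
      norm_num [Prod.ext_iff, Real.negMulLog_zero]
    rw [hsum]
    simp only [binEnt, Real.negMulLog, Real.logb]
    have h2 : Real.log 2 ≠ 0 := ne_of_gt (Real.log_pos (by norm_num))
    field_simp
    ring
  have hCr : Cr P = binEnt θ := by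
    unfold Cr
    rw [hvnP, hvnD, sub_zero]
  -- nonnegativity of binEnt
  have hnn : 0 ≤ binEnt θ := by
    have hc := Real.negMulLog_nonneg (sq_nonneg (Real.cos θ)) (by
      have := Real.cos_sq_le_one θ; linarith)
    have hs := Real.negMulLog_nonneg (sq_nonneg (Real.sin θ)) (by
      have := Real.sin_sq_le_one θ; linarith)
    have hlog2 : 0 < Real.log 2 := Real.log_pos (by norm_num)
    have : binEnt θ = (Real.negMulLog (Real.cos θ ^ 2) + Real.negMulLog (Real.sin θ ^ 2))
        / Real.log 2 := by
      simp only [binEnt, Real.negMulLog, Real.logb]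
      field_simp
      ring
    rw [this]
    positivity
  refine ⟨hCr, by linarith, ?_⟩
  rintro ⟨hθ0, hθ1⟩
  have hπ := Real.pi_pos
  have hcpos : 0 < Real.cos θ := Real.cos_pos_of_mem_Ioo ⟨by linarith, hθ1⟩
  have hspos : 0 < Real.sin θ := Real.sin_pos_of_pos_of_lt_pi hθ0 (by linarith)
  have hc2 : Real.cos θ ^ 2 < 1 := by
    have := Real.sin_sq_add_cos_sq θ
    nlinarith
  have hpos : 0 < Real.negMulLog (Real.cos θ ^ 2) := by
    have hlog : Real.log (Real.cos θ ^ 2) < 0 :=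
      Real.log_neg (by positivity) hc2
    have hmp : 0 < Real.cos θ ^ 2 * (-Real.log (Real.cos θ ^ 2)) :=
      mul_pos (by positivity) (neg_pos.mpr hlog)
    rw [mul_neg] at hmp
    simpa [Real.negMulLog, neg_mul] using hmp
  have hs := Real.negMulLog_nonneg (sq_nonneg (Real.sin θ)) (by
    have := Real.sin_sq_le_one θ; linarith)
  have hlog2 : 0 < Real.log 2 := Real.log_pos (by norm_num)
  have hb : binEnt θ = (Real.negMulLog (Real.cos θ ^ 2) + Real.negMulLog (Real.sin θ ^ 2))
      / Real.log 2 := by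
    simp only [binEnt, Real.negMulLog, Real.logb]
    field_simp
    ring
  have : 0 < binEnt θ := by rw [hb]; positivity
  linarith
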